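/- With gcd(m,n) = 1 and p an (m,n)-parking function with fixed point x_p in alcove A_p: every point of A_p is periodic under p with period dividing m, and every point not in A_p is eventually mapped into A_p by iterates of p. In particular, the set of periodic (non-fixed) points of p is exactly A_p \ {x_p}. -/

import Mathlib

/-- The shift during the action of letter `i` on `ℝ^m`: add `m` to coordinate `i`
and subtract `1` from every coordinate. -/
def shiftVec (m : ℕ) (i : Fin m) (x : Fin m → ℝ) : Fin m → ℝ :=
  fun j => x j - 1 + if j = i then (m : ℝ) else 0

/-- Sort the coordinates of a vector into weakly increasing order. -/
noncomputable def sortVec {m : ℕ} (x : Fin m → ℝ) : Fin m → ℝ := x ∘ Tuple.sort x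

/-- The action of the letter `i ∈ [m]` on `V^m`: shift, then re-sort. -/
noncomputable def letterV (m : ℕ) (i : Fin m) (x : Fin m → ℝ) : Fin m → ℝ :=
  sortVec (shiftVec m i x)

/-- `stepsV m p x i = p_{i-1} ⋯ p_1 p_0 ⋅ x`: the word acts letter by letter, the
letter `p 0` (rightmost) acting first. -/
noncomputable def stepsV (m : ℕ) (p : ℕ → Fin m) (x : Fin m → ℝ) : ℕ → (Fin m → ℝ)
  | 0 => x
  | k+1 => letterV m (p k) (stepsV m p x k)

/-- Membership in the Weyl chamber `V^m`: coordinates sum to `0` and are weakly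
increasing. -/
def InV (m : ℕ) (x : Fin m → ℝ) : Prop := (∑ j, x j) = 0 ∧ Monotone x

/-- The Euclidean norm on `ℝ^m`. -/
noncomputable def eNorm {m : ℕ} (x : Fin m → ℝ) : ℝ := Real.sqrt (∑ j, (x j) ^ 2)

/-- `p` (a word of length `n` in `[m]`, extended arbitrarily) is an
`(m,n)`-parking function: `#{j < n : p_j < i} ≥ i·n/m` for all `1 ≤ i ≤ m`. -/
def IsParking (m n : ℕ) (p : ℕ → Fin m) : Prop :=
  ∀ i : ℕ, 1 ≤ i → i ≤ m →
    i * n ≤ ((Finset.range n).filter (fun j => (p j : ℕ) < i)).card * m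

/-- `y` lies in the closed alcove (of the arrangement `x_j - x_k = m t`, `t ∈ ℤ`)
containing the point `x` (assumed in the interior of its alcove). -/
def SameClosedAlcove (m : ℕ) (x y : Fin m → ℝ) : Prop :=
  ∀ (j k : Fin m) (t : ℤ),
    (x j - x k < (m : ℝ) * t → y j - y k ≤ (m : ℝ) * t) ∧
    ((m : ℝ) * t < x j - x k → (m : ℝ) * t ≤ y j - y k)

namespace PF
open Finset
def ew (m : ℕ) (i j k : Fin m) : ℤ := (if j = i then 1 else 0) - (if k = i then 1 else 0)
lemma shiftVec_sub {m : ℕ} (i j k : Fin m) (x : Fin m → ℝ) :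
    shiftVec m i x j - shiftVec m i x k = x j - x k + (m : ℝ) * (ew m i j k) := by
  simp only [shiftVec, ew]; split_ifs <;> push_cast <;> ring
def Intr (m : ℕ) (x : Fin m → ℝ) : Prop :=
  ∀ j k : Fin m, j ≠ k → ∀ t : ℤ, x j - x k ≠ (m : ℝ) * t
lemma Intr_shift {m : ℕ} {v : Fin m → ℝ} (i : Fin m) (h : Intr m v) :
    Intr m (shiftVec m i v) := by
  intro j k hjk T heq
  rw [shiftVec_sub] at heq
  exact h j k hjk (T - ew m i j k) (by push_cast; linarith)
lemma Intr_comp {m : ℕ} {v : Fin m → ℝ} (σ : Equiv.Perm (Fin m)) (h : Intr m v) :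
    Intr m (v ∘ σ) := fun j k hjk T => h (σ j) (σ k) (fun e => hjk (σ.injective e)) T
lemma stepsV_congr {m : ℕ} {p q : ℕ → Fin m} (x : Fin m → ℝ) (t : ℕ)
    (h : ∀ i < t, p i = q i) : stepsV m p x t = stepsV m q x t := by
  induction t with
  | zero => rfl
  | succ t ih =>
      simp only [stepsV]
      rw [ih (fun i hi => h i (hi.trans (Nat.lt_succ_self t))), h t (Nat.lt_succ_self t)]


lemma sortVec_eq_comp0 {m : ℕ} {x : Fin m → ℝ} {σ : Equiv.Perm (Fin m)}
    (h : Monotone (x ∘ σ)) : sortVec x = x ∘ σ :=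
  (Tuple.comp_sort_eq_comp_iff_monotone.2 h).symm
lemma sort_align0 {m : ℕ} {v w : Fin m → ℝ} (h : ∀ j k, v j ≤ v k → w j ≤ w k) :
    sortVec w = w ∘ (Tuple.sort v) := by
  apply sortVec_eq_comp0
  exact fun a b hab => h _ _ (Tuple.monotone_sort v hab)
lemma sort_pattern_eq {m : ℕ} {v w : Fin m → ℝ} (h : ∀ j k, v j ≤ v k ↔ w j ≤ w k) :
    Tuple.sort w = Tuple.sort v := by
  rw [eq_comm, Tuple.eq_sort_iff]
  refine ⟨fun a b hab => (h _ _).1 (Tuple.monotone_sort v hab), fun i j hij hw => ?_⟩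
  have hv : v (Tuple.sort v i) = v (Tuple.sort v j) :=
    le_antisymm (Tuple.monotone_sort v hij.le) ((h _ _).2 hw.symm.le)
  exact (Tuple.eq_sort_iff.1 rfl).2 i j hij hv

/-! ### Floor data -/

noncomputable def FloorM (m : ℕ) (x : Fin m → ℝ) : Fin m → Fin m → ℤ :=
  fun j k => ⌊(x j - x k) / m⌋

lemma floor_lt_iff {m : ℕ} (hm : 0 < m) (x : Fin m → ℝ) (j k : Fin m) (T : ℤ) :
    x j - x k < (m:ℝ) * T ↔ FloorM m x j k < T := by
  have hm' : (0:ℝ) < m := by exact_mod_cast hm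
  rw [FloorM, Int.floor_lt, div_lt_iff₀ hm', mul_comm]

lemma floor_eq_iff' {m : ℕ} (hm : 0 < m) (x : Fin m → ℝ) (j k : Fin m) (T : ℤ) :
    x j - x k = (m:ℝ) * T ↔ (FloorM m x j k = T ∧ FloorM m x k j = -T) := by
  have hm' : (0:ℝ) < m := by exact_mod_cast hm
  constructor
  · intro h
    have h2 : x k - x j = (m:ℝ) * (-T) := by push_cast; linarith
    constructor
    · rw [FloorM, h, mul_comm, mul_div_assoc, div_self hm'.ne', mul_one, Int.floor_intCast]
    · rw [FloorM, h2, mul_comm, mul_div_assoc, div_self hm'.ne', mul_one]; exact_mod_cast Int.floor_intCast (-T)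
  · rintro ⟨h1, h2⟩
    have l1 : (T:ℝ) ≤ (x j - x k) / m := by
      rw [← h1]; exact Int.floor_le _
    have l2 : ((-T : ℤ):ℝ) ≤ (x k - x j) / m := by
      rw [← h2]; exact Int.floor_le _
    push_cast at l2
    rw [le_div_iff₀ hm'] at l1
    rw [le_div_iff₀ hm'] at l2
    linarith

lemma floor_le_iff {m : ℕ} (hm : 0 < m) (x : Fin m → ℝ) (j k : Fin m) (T : ℤ) :
    x j - x k ≤ (m:ℝ) * T ↔
      (FloorM m x j k < T ∨ (FloorM m x j k = T ∧ FloorM m x k j = -T)) := by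
  rw [le_iff_lt_or_eq, floor_lt_iff hm, floor_eq_iff' hm]

/-- same floor matrices gives the same weak order pattern of the shifted vectors. -/
lemma shift_pattern_of_floor_eq {m : ℕ} (hm : 0 < m) {x y : Fin m → ℝ}
    (h : FloorM m x = FloorM m y) (i : Fin m) :
    ∀ j k, shiftVec m i x j ≤ shiftVec m i x k ↔ shiftVec m i y j ≤ shiftVec m i y k := by
  intro j k
  have hx := shiftVec_sub i j k x
  have hy := shiftVec_sub i j k y
  have e1 : shiftVec m i x j ≤ shiftVec m i x k ↔ x j - x k ≤ (m:ℝ) * ((-(ew m i j k) : ℤ) : ℝ) := by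
    push_cast; constructor <;> intro <;> linarith
  have e2 : shiftVec m i y j ≤ shiftVec m i y k ↔ y j - y k ≤ (m:ℝ) * ((-(ew m i j k) : ℤ) : ℝ) := by
    push_cast; constructor <;> intro <;> linarith
  rw [e1, e2, floor_le_iff hm, floor_le_iff hm, h]

lemma letterV_eq_comp {m : ℕ} (i : Fin m) (x : Fin m → ℝ) :
    letterV m i x = (shiftVec m i x) ∘ (Tuple.sort (shiftVec m i x)) := rfl

lemma letterV_eq_comp' {m : ℕ} (hm : 0 < m) {x y : Fin m → ℝ}
    (h : FloorM m x = FloorM m y) (i : Fin m) :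
    letterV m i y = (shiftVec m i y) ∘ (Tuple.sort (shiftVec m i x)) := by
  apply sort_align0
  exact fun j k hjk => (shift_pattern_of_floor_eq hm h i j k).1 hjk

lemma sort_perm_eq_of_floor_eq {m : ℕ} (hm : 0 < m) {x y : Fin m → ℝ}
    (h : FloorM m x = FloorM m y) (i : Fin m) :
    Tuple.sort (shiftVec m i y) = Tuple.sort (shiftVec m i x) :=
  sort_pattern_eq (fun j k => (shift_pattern_of_floor_eq hm h i j k))

lemma floor_letter_eq {m : ℕ} (hm : 0 < m) {x y : Fin m → ℝ}
    (h : FloorM m x = FloorM m y) (i : Fin m) :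
    FloorM m (letterV m i x) = FloorM m (letterV m i y) := by
  have hm' : (0:ℝ) < m := by exact_mod_cast hm
  funext j k
  set σ := Tuple.sort (shiftVec m i x) with hσ
  rw [letterV_eq_comp, letterV_eq_comp' hm h]
  show ⌊(shiftVec m i x (σ j) - shiftVec m i x (σ k)) / m⌋ =
       ⌊(shiftVec m i y (σ j) - shiftVec m i y (σ k)) / m⌋
  rw [shiftVec_sub, shiftVec_sub]
  have expand : ∀ z : Fin m → ℝ,
      (z (σ j) - z (σ k) + (m:ℝ) * (ew m i (σ j) (σ k))) / m
        = (z (σ j) - z (σ k))/m + (ew m i (σ j) (σ k) : ℝ) := by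
    intro z; field_simp
  rw [expand x, expand y, Int.floor_add_intCast, Int.floor_add_intCast]
  have := congrFun (congrFun h (σ j)) (σ k)
  rw [FloorM] at this
  rw [this]
  rfl

/-- master rearrangement estimate: the sorted pair is at least as close as any matching. -/
lemma sq_sum_sort_le {m : ℕ} (a b : Fin m → ℝ) (ρ : Equiv.Perm (Fin m)) :
    ∑ j, (sortVec a j - sortVec b j)^2 ≤ ∑ j, (a (ρ j) - b j)^2 := by
  classical
  set α := Tuple.sort a
  set β := Tuple.sort b
  have key : ∑ j, a (ρ j) * b j ≤ ∑ j, sortVec a j * sortVec b j := by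
    have hmono : Monovary (sortVec a) (sortVec b) :=
      (Tuple.monotone_sort a).monovary (Tuple.monotone_sort b)
    have hre : ∑ j, a (ρ j) * b j = ∑ i, sortVec a ((β.trans (ρ.trans α.symm)) i) * sortVec b i := by
      rw [← Equiv.sum_comp β (fun j => a (ρ j) * b j)]
      apply Finset.sum_congr rfl
      intro i _
      simp [sortVec, Equiv.trans]
      exact congrArg₂ (· * ·) (congrArg a (Equiv.apply_symm_apply α _).symm) rfl
    rw [hre]
    exact hmono.sum_comp_perm_mul_le_sum_mul
  have ea : ∑ j, (sortVec a j)^2 = ∑ j, (a j)^2 := by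
    rw [← Equiv.sum_comp α (fun j => (a j)^2)]; rfl
  have eb : ∑ j, (sortVec b j)^2 = ∑ j, (b j)^2 := by
    rw [← Equiv.sum_comp β (fun j => (b j)^2)]; rfl
  have ea' : ∑ j, (a (ρ j))^2 = ∑ j, (a j)^2 := by
    rw [← Equiv.sum_comp ρ (fun j => (a j)^2)]
  have expand : ∀ u v : Fin m → ℝ, ∑ j, (u j - v j)^2
      = ∑ j, (u j)^2 + ∑ j, (v j)^2 - 2 * ∑ j, u j * v j := by
    intro u v
    rw [← Finset.sum_add_distrib, Finset.mul_sum, ← Finset.sum_sub_distrib]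
    apply Finset.sum_congr rfl
    intro j _; ring
  have h1 := expand (fun j => sortVec a j) (fun j => sortVec b j)
  have h2 := expand (fun j => a (ρ j)) b
  rw [h1, h2, ea, eb, ea']
  linarith
/-- swapping two coordinates of the matching changes the squared distance by the product. -/
lemma sq_sum_swap {m : ℕ} (a b : Fin m → ℝ) {j k : Fin m} (hjk : j ≠ k) :
    ∑ j', (a (Equiv.swap j k j') - b j')^2
      = ∑ j', (a j' - b j')^2 + 2 * (a j - a k) * (b j - b k) := by
  classical
  have hmem : ∀ x : Fin m, x ∈ (univ : Finset (Fin m)) := fun x => mem_univ x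
  have split : ∀ f : Fin m → ℝ, ∑ j', f j' = f j + (f k + ∑ j' ∈ (univ.erase j).erase k, f j') := by
    intro f
    rw [Finset.add_sum_erase _ f (mem_erase.2 ⟨(Ne.symm hjk), hmem k⟩),
        Finset.add_sum_erase _ f (hmem j)]
  rw [split (fun j' => (a (Equiv.swap j k j') - b j')^2), split (fun j' => (a j' - b j')^2)]
  have hrest : ∑ j' ∈ (univ.erase j).erase k, (a (Equiv.swap j k j') - b j')^2
      = ∑ j' ∈ (univ.erase j).erase k, (a j' - b j')^2 := by
    apply Finset.sum_congr rfl
    intro x hx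
    have hxk : x ≠ k := (mem_erase.1 hx).1
    have hxj : x ≠ j := (mem_erase.1 (mem_erase.1 hx).2).1
    rw [Equiv.swap_apply_of_ne_of_ne hxj hxk]
  rw [hrest, Equiv.swap_apply_left, Equiv.swap_apply_right]
  ring


lemma stepsV_add {m : ℕ} (p : ℕ → Fin m) (x : Fin m → ℝ) (a b : ℕ) :
    stepsV m p x (a + b) = stepsV m (fun i => p (a + i)) (stepsV m p x a) b := by
  induction b with
  | zero => rfl
  | succ b ih =>
      show stepsV m p x ((a + b) + 1) = _
      simp only [stepsV, ih]

lemma discrete_ivt (g : ℕ → ℤ) (hstep : ∀ t, |g (t+1) - g t| ≤ 1) :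
    ∀ a b K, a ≤ b → g a ≤ K → K ≤ g b → ∃ t, a ≤ t ∧ t ≤ b ∧ g t = K := by
  intro a b K hab
  induction b with
  | zero =>
      intro h1 h2
      interval_cases a
      exact ⟨0, le_refl _, le_refl _, le_antisymm h1 h2⟩
  | succ b ih =>
      intro h1 h2
      rcases Nat.lt_or_ge a (b+1) with hlt | hge
      · have hab' : a ≤ b := Nat.lt_succ_iff.1 hlt
        rcases le_or_gt K (g b) with hK | hK
        · obtain ⟨t, ht1, ht2, ht3⟩ := ih hab' h1 hK
          exact ⟨t, ht1, ht2.trans (Nat.le_succ b), ht3⟩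
        · have h3 := hstep b
          rw [abs_le] at h3
          have : g (b+1) = K := by omega
          exact ⟨b+1, hlt.le, le_refl _, this⟩
      · have heq : a = b + 1 := le_antisymm hab hge
        exact ⟨a, le_refl _, heq.le, le_antisymm h1 (by rw [heq]; exact h2)⟩

/-! ### main set-up -/

structure Setup (m n : ℕ) (p : ℕ → Fin m) (xp : Fin m → ℝ) : Prop where
  hm : 0 < m
  hn : 0 < n
  hcop : Nat.gcd m n = 1
  hxp : InV m xp
  hfixW : stepsV m (fun i => p (i % n)) xp n = xp
  halc : ∀ j k : Fin m, j ≠ k → ∀ t : ℤ, xp j - xp k ≠ (m : ℝ) * t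

/-- the orbit of a point under the infinite periodic parking word. -/
noncomputable def Orb (m n : ℕ) (p : ℕ → Fin m) (x : Fin m → ℝ) (t : ℕ) : Fin m → ℝ :=
  stepsV m (fun i => p (i % n)) x t

/-- the sorting permutation used at step `t` of the orbit of `x`. -/
noncomputable def sg (m n : ℕ) (p : ℕ → Fin m) (x : Fin m → ℝ) (t : ℕ) :
    Equiv.Perm (Fin m) :=
  Tuple.sort (shiftVec m (p (t % n)) (Orb m n p x t))

/-- accumulated (inverse) trajectory permutations of the base orbit. -/
noncomputable def Pp (m n : ℕ) (p : ℕ → Fin m) (xp : Fin m → ℝ) : ℕ → Equiv.Perm (Fin m)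
  | 0 => Equiv.refl _
  | t+1 => (sg m n p xp t).trans (Pp m n p xp t)

/-- selection counters along the base orbit. -/
noncomputable def Cn (m n : ℕ) (p : ℕ → Fin m) (xp : Fin m → ℝ) : ℕ → Fin m → ℤ
  | 0 => fun _ => 0
  | t+1 => fun j => Cn m n p xp t (sg m n p xp t j) +
      (if sg m n p xp t j = p (t % n) then 1 else 0)

variable {m n : ℕ} {p : ℕ → Fin m} {xp : Fin m → ℝ}

lemma Orb_succ (x : Fin m → ℝ) (t : ℕ) :
    Orb m n p x (t+1) = letterV m (p (t % n)) (Orb m n p x t) := rfl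

lemma Orb_comp (x : Fin m → ℝ) (t : ℕ) :
    Orb m n p x (t+1) = (shiftVec m (p (t % n)) (Orb m n p x t)) ∘ (sg m n p x t) := rfl

lemma Pp_succ (t : ℕ) (j : Fin m) :
    Pp m n p xp (t+1) j = Pp m n p xp t (sg m n p xp t j) := rfl

lemma Orb_intr (S : Setup m n p xp) : ∀ t, Intr m (Orb m n p xp t) := by
  intro t
  induction t with
  | zero => exact S.halc
  | succ t ih => rw [Orb_comp]; exact Intr_comp _ (Intr_shift _ ih)

lemma Orb_per (S : Setup m n p xp) : ∀ t, Orb m n p xp (t + n) = Orb m n p xp t := by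
  intro t
  induction t with
  | zero => rw [Nat.zero_add]; exact S.hfixW
  | succ t ih =>
      have h : t + 1 + n = (t + n) + 1 := by omega
      rw [h, Orb_succ, Orb_succ, Nat.add_mod_right, ih]

lemma Orb_per' (S : Setup m n p xp) : ∀ k t, Orb m n p xp (t + n * k) = Orb m n p xp t := by
  intro k
  induction k with
  | zero => intro t; simp
  | succ k ih =>
      intro t
      have h : t + n * (k+1) = (t + n * k) + n := by ring
      rw [h, Orb_per S, ih]

lemma sg_per (S : Setup m n p xp) (t : ℕ) : sg m n p xp (t + n) = sg m n p xp t := by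
  unfold sg
  rw [Nat.add_mod_right, Orb_per S]

lemma Cn_succ (t : ℕ) (j : Fin m) :
    Cn m n p xp (t+1) j = Cn m n p xp t (sg m n p xp t j) +
      (if sg m n p xp t j = p (t % n) then 1 else 0) := rfl

lemma ZC (S : Setup m n p xp) :
    ∀ t j, Orb m n p xp t j
      = xp (Pp m n p xp t j) + (m : ℝ) * (Cn m n p xp t j) - t := by
  intro t
  induction t with
  | zero => intro j; simp [Orb, stepsV, Pp, Cn]
  | succ t ih =>
      intro j
      have h1 : Orb m n p xp (t+1) j
          = Orb m n p xp t (sg m n p xp t j) - 1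
            + (if sg m n p xp t j = p (t % n) then (m:ℝ) else 0) := by
        rw [Orb_comp]; rfl
      rw [h1, ih, Cn_succ, Pp_succ]
      split_ifs <;> push_cast <;> ring

lemma Pp_addn (S : Setup m n p xp) :
    ∀ t, Pp m n p xp (t + n) = (Pp m n p xp t).trans (Pp m n p xp n) := by
  intro t
  induction t with
  | zero => ext j; simp [Pp]
  | succ t ih =>
      ext j
      have h : t + 1 + n = (t + n) + 1 := by omega
      rw [h, Pp_succ, sg_per S, ih]
      rfl

lemma Pp_mul (S : Setup m n p xp) :
    ∀ k, Pp m n p xp (n * k) = (Pp m n p xp n) ^ k := by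
  intro k
  induction k with
  | zero => rw [Nat.mul_zero, pow_zero]; rfl
  | succ k ih =>
      have h : n * (k+1) = n * k + n := by ring
      rw [h, Pp_addn S, ih, ← Equiv.Perm.mul_def, ← pow_succ']

lemma REL (S : Setup m n p xp) (j : Fin m) :
    xp j = xp (Pp m n p xp n j) + (m : ℝ) * (Cn m n p xp n j) - n := by
  have := ZC S n j
  rwa [show Orb m n p xp n = xp from S.hfixW] at this

lemma TEL (S : Setup m n p xp) :
    ∀ (L : ℕ) (j : Fin m), ∃ K : ℤ,
      xp j = xp (((Pp m n p xp n) ^ L) j) + (m : ℝ) * K - (n : ℝ) * L := by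
  intro L
  induction L with
  | zero => intro j; exact ⟨0, by simp⟩
  | succ L ih =>
      intro j
      obtain ⟨K, hK⟩ := ih j
      refine ⟨K + Cn m n p xp n (((Pp m n p xp n) ^ L) j), ?_⟩
      have h2 := REL S (((Pp m n p xp n) ^ L) j)
      have h3 : (Pp m n p xp n) (((Pp m n p xp n) ^ L) j)
          = ((Pp m n p xp n) ^ (L+1)) j := by
        rw [pow_succ']; rfl
      rw [h3] at h2
      push_cast
      push_cast at hK h2
      linarith

lemma DVD (S : Setup m n p xp) (j : Fin m) (L : ℕ)
    (hfix : ((Pp m n p xp n) ^ L) j = j) : m ∣ L := by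
  obtain ⟨K, hK⟩ := TEL S L j
  rw [hfix] at hK
  have hmn : (m : ℝ) * K = (n : ℝ) * L := by linarith
  have hint : (m : ℤ) * K = (n : ℤ) * L := by exact_mod_cast hmn
  have hdvd : (m : ℤ) ∣ ((n * L : ℕ) : ℤ) := ⟨K, by push_cast; linarith [hint]⟩
  have hdvd' : m ∣ n * L := by exact_mod_cast hdvd
  exact (Nat.Coprime.dvd_of_dvd_mul_left S.hcop hdvd')

/-- if two forward iterates of a point agree, the `m`-th power fixes the point. -/
lemma tau_key (S : Setup m n p xp) (j : Fin m) (a b : ℕ) (hlt : a < b)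
    (heq : ((Pp m n p xp n) ^ a) j = ((Pp m n p xp n) ^ b) j) :
    m ∣ (b - a) := by
  set τ := Pp m n p xp n with hτ
  have hsplit : b = (b - a) + a := by omega
  have h2 : (τ ^ b) j = (τ ^ (b - a)) ((τ ^ a) j) := by
    conv_lhs => rw [hsplit]
    rw [pow_add]; rfl
  have hper : (τ ^ (b - a)) ((τ ^ a) j) = (τ ^ a) j := by rw [← h2, ← heq]
  exact DVD S ((τ ^ a) j) (b - a) hper

lemma tau_pow_m (S : Setup m n p xp) (j : Fin m) : ((Pp m n p xp n) ^ m) j = j := by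
  classical
  set τ := Pp m n p xp n with hτ
  have hcard : Fintype.card (Fin m) < Fintype.card (Fin (m+1)) := by simp
  obtain ⟨a, b, hab, heq⟩ :=
    Fintype.exists_ne_map_eq_of_card_lt (fun a : Fin (m+1) => (τ ^ (a : ℕ)) j) hcard
  have hab' : (a : ℕ) ≠ (b : ℕ) := fun h => hab (Fin.ext h)
  have main : ∀ u v : Fin (m+1), (u:ℕ) < (v:ℕ) → ((τ ^ (u:ℕ)) j = (τ ^ (v:ℕ)) j) →
      (τ ^ m) j = j := by
    intro u v huv he
    have hdvd := tau_key S j (u:ℕ) (v:ℕ) huv he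
    have hvlt := v.isLt
    have h1 : 0 < (v:ℕ) - (u:ℕ) := by omega
    have hmle := Nat.le_of_dvd h1 hdvd
    have hu0 : (u:ℕ) = 0 := by omega
    have hvm : (v:ℕ) = m := by omega
    rw [hu0, pow_zero, hvm] at he
    simpa using he.symm
  rcases Nat.lt_or_ge (a:ℕ) (b:ℕ) with h | h
  · exact main a b h heq
  · exact main b a (by omega) heq.symm

lemma tau_orbit (S : Setup m n p xp) (γ α : Fin m) :
    ∃ k : ℕ, ((Pp m n p xp n) ^ k) γ = α := by
  classical
  set τ := Pp m n p xp n with hτ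
  have hinj : Function.Injective (fun a : Fin m => (τ ^ (a : ℕ)) γ) := by
    have main : ∀ u v : Fin m, (u:ℕ) < (v:ℕ) → ((τ ^ (u:ℕ)) γ = (τ ^ (v:ℕ)) γ) → False := by
      intro u v huv he
      have hdvd := tau_key S γ (u:ℕ) (v:ℕ) huv he
      have hvlt := v.isLt
      have h1 : 0 < (v:ℕ) - (u:ℕ) := by omega
      have hmle := Nat.le_of_dvd h1 hdvd
      omega
    intro a b heq
    by_contra hab
    have hab' : (a : ℕ) ≠ (b : ℕ) := fun h => hab (Fin.ext h)
    rcases Nat.lt_or_ge (a:ℕ) (b:ℕ) with h | h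
    · exact main a b h heq
    · exact main b a (by omega) heq.symm
  have hsurj := Finite.surjective_of_injective hinj
  obtain ⟨a, ha⟩ := hsurj α
  exact ⟨(a : ℕ), ha⟩

end PF

namespace PF2
open PF
section
variable {m n : ℕ} {p : ℕ → Fin m} {xp : Fin m → ℝ}

lemma SCA_shift {v w : Fin m → ℝ} (i : Fin m) (h : SameClosedAlcove m v w) :
    SameClosedAlcove m (shiftVec m i v) (shiftVec m i w) := by
  intro j k T
  have hv := shiftVec_sub i j k v
  have hw := shiftVec_sub i j k w
  have h' := h j k (T - ew m i j k)
  constructor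
  · intro hlt
    have h1 : v j - v k < (m:ℝ) * ((T - ew m i j k : ℤ) : ℝ) := by push_cast; linarith
    have h2 := h'.1 h1
    push_cast at h2 ⊢
    linarith
  · intro hlt
    have h1 : (m:ℝ) * ((T - ew m i j k : ℤ) : ℝ) < v j - v k := by push_cast; linarith
    have h2 := h'.2 h1
    push_cast at h2 ⊢
    linarith

lemma SCA_comp {v w : Fin m → ℝ} (σ : Equiv.Perm (Fin m))
    (h : SameClosedAlcove m v w) : SameClosedAlcove m (v ∘ σ) (w ∘ σ) :=
  fun j k T => h (σ j) (σ k) T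

lemma align_of_SCA {v w : Fin m → ℝ} (h : SameClosedAlcove m v w)
    (i : Fin m) : ∀ j k, shiftVec m i v j < shiftVec m i v k →
      shiftVec m i w j ≤ shiftVec m i w k := by
  intro j k hlt
  have hsv := shiftVec_sub i j k v
  have hsw := shiftVec_sub i j k w
  have h1 : v j - v k < (m:ℝ) * ((-(ew m i j k) : ℤ) : ℝ) := by push_cast; linarith
  have h2 := (h j k (-(ew m i j k))).1 h1
  push_cast at h2
  linarith

lemma sortVec_eq_comp {x : Fin m → ℝ} {σ : Equiv.Perm (Fin m)}
    (h : Monotone (x ∘ σ)) : sortVec x = x ∘ σ :=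
  (Tuple.comp_sort_eq_comp_iff_monotone.2 h).symm

lemma sort_align {v w : Fin m → ℝ} (h : ∀ j k, v j ≤ v k → w j ≤ w k) :
    sortVec w = w ∘ (Tuple.sort v) := by
  apply sortVec_eq_comp
  exact fun a b hab => h _ _ (Tuple.monotone_sort v hab)

def AlignedAt (m n : ℕ) (p : ℕ → Fin m) (xp y : Fin m → ℝ) (t : ℕ) : Prop :=
  ∀ j k, shiftVec m (p (t % n)) (Orb m n p xp t) j
          < shiftVec m (p (t % n)) (Orb m n p xp t) k →
    shiftVec m (p (t % n)) (Orb m n p y t) j ≤ shiftVec m (p (t % n)) (Orb m n p y t) k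

lemma Orb_comp' (S : Setup m n p xp) {y : Fin m → ℝ} (t : ℕ)
    (hAL : AlignedAt m n p xp y t) :
    Orb m n p y (t+1)
      = (shiftVec m (p (t % n)) (Orb m n p y t)) ∘ (sg m n p xp t) := by
  apply sort_align (v := shiftVec m (p (t % n)) (Orb m n p xp t))
  intro j k hjk
  rcases eq_or_ne j k with rfl | hne
  · exact le_refl _
  · rcases lt_or_eq_of_le hjk with hlt | heq
    · exact hAL j k hlt
    · exact absurd (show shiftVec m (p (t % n)) (Orb m n p xp t) j
          - shiftVec m (p (t % n)) (Orb m n p xp t) k = (m:ℝ)*((0:ℤ):ℝ) by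
            rw [heq]; simp)
        (Intr_shift _ (Orb_intr S t) j k hne 0)

lemma CO4 (S : Setup m n p xp) {y : Fin m → ℝ} (hAL : ∀ t, AlignedAt m n p xp y t) :
    ∀ t j, Orb m n p y t j
      = Orb m n p xp t j + (y (Pp m n p xp t j) - xp (Pp m n p xp t j)) := by
  intro t
  induction t with
  | zero => intro j; show y j = xp j + (y j - xp j); ring
  | succ t ih =>
      intro j
      have h1 : Orb m n p y (t+1) j
          = shiftVec m (p (t % n)) (Orb m n p y t) (sg m n p xp t j) :=
        congrFun (Orb_comp' S t (hAL t)) j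
      have h2 : Orb m n p xp (t+1) j
          = shiftVec m (p (t % n)) (Orb m n p xp t) (sg m n p xp t j) :=
        congrFun (Orb_comp xp t) j
      rw [h1, h2, Pp_succ]
      simp only [shiftVec]
      rw [ih]
      ring

lemma SCA_all (S : Setup m n p xp) {y : Fin m → ℝ} (hSCA : SameClosedAlcove m xp y) :
    ∀ t, SameClosedAlcove m (Orb m n p xp t) (Orb m n p y t) := by
  intro t
  induction t with
  | zero => exact hSCA
  | succ t ih =>
      have hAL : AlignedAt m n p xp y t := fun j k => align_of_SCA ih (p (t % n)) j k
      rw [Orb_comp, Orb_comp' S t hAL]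
      exact SCA_comp _ (SCA_shift _ ih)

lemma AL_all (S : Setup m n p xp) {y : Fin m → ℝ} (hSCA : SameClosedAlcove m xp y) :
    ∀ t, AlignedAt m n p xp y t :=
  fun t j k => align_of_SCA (SCA_all S hSCA t) _ j k

lemma Orb_nm_eq (S : Setup m n p xp) : Orb m n p xp (n*m) = xp := by
  have := Orb_per' S m 0
  simp only [Nat.zero_add] at this; exact this

lemma Pp_nm_eq (S : Setup m n p xp) : Pp m n p xp (n*m) = 1 := by
  have h : ∀ j, (Pp m n p xp (n*m)) j = j := fun j => by rw [Pp_mul S]; exact tau_pow_m S j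
  exact Equiv.ext (fun j => (h j).trans (Equiv.Perm.one_apply j).symm)

lemma part1 (S : Setup m n p xp) {y : Fin m → ℝ} (hSCA : SameClosedAlcove m xp y) :
    stepsV m (fun i => p (i % n)) y (n * m) = y := by
  funext j
  have h := CO4 S (AL_all S hSCA) (n*m) j
  show Orb m n p y (n*m) j = y j
  rw [h, Orb_nm_eq S, Pp_nm_eq S]
  show xp j + (y j - xp j) = y j
  ring

end
end PF2

namespace PF3
open PF PF2
section
variable {m n : ℕ} {p : ℕ → Fin m} {xp : Fin m → ℝ}

lemma xp_strictMono (S : Setup m n p xp) : StrictMono xp := by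
  have hinj : Function.Injective xp := by
    intro a b hab
    by_contra hne
    exact S.halc a b hne 0 (by rw [hab]; simp)
  exact S.hxp.2.strictMono_of_injective hinj

lemma symm_step (t : ℕ) (ξ : Fin m) :
    sg m n p xp t ((Pp m n p xp (t+1)).symm ξ) = (Pp m n p xp t).symm ξ := by
  apply (Pp m n p xp t).injective
  rw [Equiv.apply_symm_apply]
  exact (Pp_succ t ((Pp m n p xp (t+1)).symm ξ)).symm.trans
    (Equiv.apply_symm_apply _ ξ)

lemma E_oneside (S : Setup m n p xp) {y : Fin m → ℝ}
    (hAL : ∀ t, AlignedAt m n p xp y t) (α β : Fin m) (T : ℤ)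
    (hlt : xp α - xp β < (m:ℝ) * T) : y α - y β ≤ (m:ℝ) * T := by
  have hm' : (0:ℝ) < m := by exact_mod_cast S.hm
  rcases eq_or_ne α β with rfl | hne
  · simp only [sub_self] at hlt ⊢
    linarith
  -- main case
  set r : ℝ := xp β - xp α with hr
  set gs : ℤ := -⌊r / (m:ℝ)⌋ with hgs
  have hfl : (⌊r / (m:ℝ)⌋ : ℝ) ≤ r / m := Int.floor_le _
  have hfl2 : r / (m:ℝ) < ⌊r / (m:ℝ)⌋ + 1 := Int.lt_floor_add_one _
  have hflm : (⌊r / (m:ℝ)⌋ : ℝ) * m ≤ r := by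
    rw [← le_div_iff₀ hm']; exact hfl
  have hflm2 : r < ((⌊r / (m:ℝ)⌋ : ℝ) + 1) * m := by
    rw [← div_lt_iff₀ hm']; exact hfl2
  have fr0 : 0 ≤ r + (m:ℝ) * (gs : ℤ) := by rw [hgs]; push_cast; nlinarith
  have frne : r + (m:ℝ) * ((gs : ℤ):ℝ) ≠ 0 := by
    intro h0
    refine S.halc β α (Ne.symm hne) (-gs) ?_
    push_cast
    push_cast at h0
    linarith
  have fr1 : 0 < r + (m:ℝ) * (gs:ℤ) := lt_of_le_of_ne fr0 (Ne.symm (by push_cast at frne ⊢; exact frne))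
  have fr2 : r + (m:ℝ) * (gs:ℤ) < m := by rw [hgs]; push_cast; nlinarith
  have min_gs : ∀ T' : ℤ, 0 < r + (m:ℝ) * T' → gs ≤ T' := by
    intro T' hT
    have h1 : ((-T' : ℤ):ℝ) ≤ r / m := by
      rw [le_div_iff₀ hm']
      push_cast
      nlinarith
    have h2 : -T' ≤ ⌊r / (m:ℝ)⌋ := Int.le_floor.2 (by push_cast at h1 ⊢; linarith)
    rw [hgs]
    omega
  set Gf : ℕ → ℤ := fun t => Cn m n p xp t ((Pp m n p xp t).symm β)
      - Cn m n p xp t ((Pp m n p xp t).symm α) with hGf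
  have wfact : ∀ t, Orb m n p xp t ((Pp m n p xp t).symm β)
      - Orb m n p xp t ((Pp m n p xp t).symm α) = r + (m:ℝ) * (Gf t) := by
    intro t
    rw [ZC S t ((Pp m n p xp t).symm β), ZC S t ((Pp m n p xp t).symm α),
      Equiv.apply_symm_apply, Equiv.apply_symm_apply, hGf]
    push_cast
    ring
  have Gstep : ∀ t, |Gf (t+1) - Gf t| ≤ 1 := by
    intro t
    have hb := Cn_succ (m:=m) (n:=n) (p:=p) (xp:=xp) t ((Pp m n p xp (t+1)).symm β)
    have ha := Cn_succ (m:=m) (n:=n) (p:=p) (xp:=xp) t ((Pp m n p xp (t+1)).symm α)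
    rw [symm_step t β] at hb
    rw [symm_step t α] at ha
    simp only [hGf]
    rw [hb, ha]
    split_ifs <;> simp
  have constraintL : ∀ t, 0 < r + (m:ℝ) * (Gf (t+1)) →
      (y α - xp α) - (y β - xp β) ≤ r + (m:ℝ) * (Gf (t+1)) := by
    intro t hpos
    set J := (Pp m n p xp (t+1)).symm α with hJ
    set K := (Pp m n p xp (t+1)).symm β with hK
    have hw := wfact (t+1)
    have hZ : Orb m n p xp (t+1) J < Orb m n p xp (t+1) K := by
      rw [← hJ, ← hK] at hw
      linarith
    have e1 : shiftVec m (p (t % n)) (Orb m n p xp t) (sg m n p xp t J)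
        = Orb m n p xp (t+1) J := (congrFun (Orb_comp xp t) J).symm
    have e2 : shiftVec m (p (t % n)) (Orb m n p xp t) (sg m n p xp t K)
        = Orb m n p xp (t+1) K := (congrFun (Orb_comp xp t) K).symm
    have e3 : shiftVec m (p (t % n)) (Orb m n p y t) (sg m n p xp t J)
        = Orb m n p y (t+1) J := (congrFun (Orb_comp' S t (hAL t)) J).symm
    have e4 : shiftVec m (p (t % n)) (Orb m n p y t) (sg m n p xp t K)
        = Orb m n p y (t+1) K := (congrFun (Orb_comp' S t (hAL t)) K).symm
    have hY : Orb m n p y (t+1) J ≤ Orb m n p y (t+1) K := by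
      have := hAL t (sg m n p xp t J) (sg m n p xp t K) (by rw [e1, e2]; exact hZ)
      rw [e3, e4] at this
      exact this
    have h4 := CO4 S hAL (t+1) J
    have h5 := CO4 S hAL (t+1) K
    rw [show Pp m n p xp (t+1) J = α from Equiv.apply_symm_apply _ α] at h4
    rw [show Pp m n p xp (t+1) K = β from Equiv.apply_symm_apply _ β] at h5
    rw [← hJ, ← hK] at hw
    rw [h4, h5] at hY
    linarith
  have hm1 : 0 < m := S.hm
  set top : Fin m := ⟨m-1, by omega⟩ with htop
  have le_top' : ∀ b : Fin m, b ≤ top := by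
    intro b
    have := b.isLt
    rw [Fin.le_def]
    simp only [htop]
    omega
  -- endpoint 1
  obtain ⟨j1, hj1⟩ := tau_orbit S top α
  have e1 : (Pp m n p xp (n*j1)).symm α = top := by
    rw [Pp_mul S]
    exact (Equiv.symm_apply_eq _).2 hj1.symm
  have hz1 : Orb m n p xp (n*j1) = xp := by
    have := Orb_per' S j1 0
    simp only [Nat.zero_add] at this; exact this
  have hG1 : Gf (n*j1) < gs := by
    have hw1 := wfact (n*j1)
    rw [hz1, e1] at hw1
    have hne1 : (Pp m n p xp (n*j1)).symm β ≠ top := by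
      rw [← e1]
      intro h
      exact hne (((Pp m n p xp (n*j1)).symm.injective h).symm)
    have hlt1 : xp ((Pp m n p xp (n*j1)).symm β) < xp top :=
      xp_strictMono S (lt_of_le_of_ne (le_top' _) hne1)
    have : (Gf (n*j1) : ℝ) < (gs:ℤ) := by nlinarith
    exact_mod_cast this
  -- endpoint 2
  obtain ⟨j2, hj2⟩ := tau_orbit S top β
  have e2 : (Pp m n p xp (n*j2)).symm β = top := by
    rw [Pp_mul S]
    exact (Equiv.symm_apply_eq _).2 hj2.symm
  have hz2 : Orb m n p xp (n*j2) = xp := by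
    have := Orb_per' S j2 0
    simp only [Nat.zero_add] at this; exact this
  have hG2 : gs ≤ Gf (n*j2) := by
    have hw2 := wfact (n*j2)
    rw [hz2, e2] at hw2
    have hne2 : (Pp m n p xp (n*j2)).symm α ≠ top := by
      rw [← e2]
      intro h
      exact hne ((Pp m n p xp (n*j2)).symm.injective h)
    have hlt2 : xp ((Pp m n p xp (n*j2)).symm α) < xp top :=
      xp_strictMono S (lt_of_le_of_ne (le_top' _) hne2)
    refine min_gs _ ?_
    linarith
  -- discrete IVT
  have hivt : ∃ t0, Gf t0 = gs := by
    rcases le_total (n*j1) (n*j2) with hc | hc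
    · obtain ⟨t0, _, _, h3⟩ := discrete_ivt Gf Gstep (n*j1) (n*j2) gs hc hG1.le hG2
      exact ⟨t0, h3⟩
    · obtain ⟨t0, _, _, h3⟩ := discrete_ivt (fun t => -Gf t)
        (fun t => by have h := Gstep t; rw [abs_sub_comm] at h; simpa [neg_add_eq_sub] using h)
        (n*j2) (n*j1) (-gs) hc (by simpa using neg_le_neg hG2) (by simpa using neg_le_neg hG1.le)
      have h4 : -Gf t0 = -gs := h3
      exact ⟨t0, by omega⟩
  obtain ⟨t0, ht0⟩ := hivt
  have hT1 : ∃ t1, 1 ≤ t1 ∧ Gf t1 = gs := by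
    rcases Nat.eq_zero_or_pos t0 with rfl | hpos
    · -- gs = Gf 0 = 0; use n*m instead
      have hGf0 : Gf 0 = 0 := by simp [hGf, Cn, Pp]
      have hgs0 : gs = 0 := by omega
      have hznm := Orb_nm_eq S
      have hPnm := Pp_nm_eq S
      have hwnm := wfact (n*m)
      rw [hznm, hPnm] at hwnm
      simp only [Equiv.Perm.one_symm, Equiv.Perm.one_apply] at hwnm
      have : (m:ℝ) * (Gf (n*m)) = 0 := by rw [hr] at hwnm; linarith
      have hGnm : (Gf (n*m) : ℝ) = 0 := by
        rcases mul_eq_zero.1 this with h | h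
        · exact absurd h hm'.ne'
        · exact h
      have : Gf (n*m) = 0 := by exact_mod_cast hGnm
      exact ⟨n*m, Nat.mul_pos S.hn S.hm, by omega⟩
    · exact ⟨t0, hpos, ht0⟩
  obtain ⟨t1, ht1pos, hGt1⟩ := hT1
  obtain ⟨t2, rfl⟩ : ∃ t2, t1 = t2 + 1 := ⟨t1 - 1, by omega⟩
  have hcon := constraintL t2 (by rw [hGt1]; exact fr1)
  rw [hGt1] at hcon
  have hTge : gs ≤ T := by
    refine min_gs T ?_
    rw [hr]
    linarith
  have hmono : (m:ℝ) * (gs:ℤ) ≤ (m:ℝ) * T := by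
    have : ((gs:ℤ):ℝ) ≤ ((T:ℤ):ℝ) := by exact_mod_cast hTge
    nlinarith
  rw [hr] at hcon
  linarith

lemma lemE (S : Setup m n p xp) {y : Fin m → ℝ}
    (hAL : ∀ t, AlignedAt m n p xp y t) : SameClosedAlcove m xp y := by
  intro α β T
  constructor
  · exact fun h => E_oneside S hAL α β T h
  · intro h
    have h2 : xp β - xp α < (m:ℝ) * ((-T : ℤ):ℝ) := by push_cast; linarith
    have := E_oneside S hAL β α (-T) h2
    push_cast at this
    linarith

end
end PF3

namespace PF4
open PF PF2 PF3 Finset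
section
variable {m n : ℕ} {p : ℕ → Fin m} {xp : Fin m → ℝ}

noncomputable def Dst (m n : ℕ) (p : ℕ → Fin m) (xp x : Fin m → ℝ) (t : ℕ) : ℝ :=
  ∑ j, (Orb m n p x t j - Orb m n p xp t j)^2

lemma shift_cancel (i : Fin m) (u v : Fin m → ℝ) (j : Fin m) :
    shiftVec m i u j - shiftVec m i v j = u j - v j := by simp [shiftVec]

lemma Dst_nonneg (x : Fin m → ℝ) (t : ℕ) : 0 ≤ Dst m n p xp x t :=
  Finset.sum_nonneg (fun j _ => sq_nonneg _)

lemma Dst_mono (x : Fin m → ℝ) (t : ℕ) : Dst m n p xp x (t+1) ≤ Dst m n p xp x t := by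
  have h := sq_sum_sort_le (shiftVec m (p (t % n)) (Orb m n p x t))
      (shiftVec m (p (t % n)) (Orb m n p xp t)) 1
  have e2 : ∑ j, (shiftVec m (p (t % n)) (Orb m n p x t) ((1 : Equiv.Perm (Fin m)) j)
      - shiftVec m (p (t % n)) (Orb m n p xp t) j)^2 = Dst m n p xp x t := by
    apply Finset.sum_congr rfl
    intro j _
    rw [Equiv.Perm.one_apply, shift_cancel]
  rw [e2] at h
  exact h

lemma Dst_mono_le (x : Fin m → ℝ) {t t' : ℕ} (h : t ≤ t') :
    Dst m n p xp x t' ≤ Dst m n p xp x t := by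
  induction t' with
  | zero =>
      have h0 : t = 0 := Nat.le_zero.1 h
      subst h0
      exact le_refl _
  | succ t' ih =>
      rcases Nat.lt_or_ge t (t'+1) with hlt | hge
      · exact (Dst_mono x t').trans (ih (Nat.lt_succ_iff.1 hlt))
      · rw [le_antisymm h hge]

lemma align_of_Dconst (x : Fin m → ℝ) (t : ℕ)
    (h : Dst m n p xp x (t+1) = Dst m n p xp x t) : AlignedAt m n p xp x t := by
  by_contra hno
  unfold AlignedAt at hno
  push_neg at hno
  obtain ⟨j, k, hB, hA⟩ := hno
  set A := shiftVec m (p (t % n)) (Orb m n p x t) with hAdef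
  set B := shiftVec m (p (t % n)) (Orb m n p xp t) with hBdef
  have hjk : j ≠ k := fun hh => lt_irrefl _ (hh ▸ hB)
  have h1 := sq_sum_sort_le A B (Equiv.swap j k)
  have h2 := sq_sum_swap A B hjk
  have e2 : ∑ j', (A j' - B j')^2 = Dst m n p xp x t := by
    apply Finset.sum_congr rfl
    intro j' _
    rw [hAdef, hBdef, shift_cancel]
  rw [h2, e2] at h1
  have hD1 : Dst m n p xp x (t+1) ≤ Dst m n p xp x t + 2*(A j - A k)*(B j - B k) := h1
  nlinarith [hD1, hA, hB, h]

lemma abs_le_one_add_sq {w c : ℝ} (h : w^2 ≤ c) (hc : 0 ≤ c) : |w| ≤ 1 + c := by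
  nlinarith [sq_abs w, sq_nonneg (|w| - 1), abs_nonneg w]

lemma coord_bound (x : Fin m → ℝ) (t : ℕ) (j : Fin m) :
    (Orb m n p x t j - Orb m n p xp t j)^2 ≤ Dst m n p xp x 0 := by
  refine le_trans ?_ (Dst_mono_le x (Nat.zero_le t))
  exact Finset.single_le_sum (f := fun j' => (Orb m n p x t j' - Orb m n p xp t j')^2)
    (fun j' _ => sq_nonneg _) (Finset.mem_univ j)

lemma Orb_mod (S : Setup m n p xp) (t : ℕ) :
    Orb m n p xp t = Orb m n p xp (t % n) := by
  conv_lhs => rw [← Nat.mod_add_div t n]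
  exact Orb_per' S (t / n) (t % n)

noncomputable def Zb (m n : ℕ) (p : ℕ → Fin m) (xp : Fin m → ℝ) : ℝ :=
  ∑ s ∈ Finset.range n, ∑ j, |Orb m n p xp s j|

lemma Zb_bound (S : Setup m n p xp) (t : ℕ) (j : Fin m) :
    |Orb m n p xp t j| ≤ Zb m n p xp := by
  rw [Orb_mod S]
  refine le_trans (Finset.single_le_sum (f := fun j' => |Orb m n p xp (t % n) j'|)
    (fun j' _ => abs_nonneg _) (Finset.mem_univ j)) ?_
  exact Finset.single_le_sum (f := fun s => ∑ j', |Orb m n p xp s j'|)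
    (fun s _ => Finset.sum_nonneg (fun j' _ => abs_nonneg _))
    (Finset.mem_range.2 (Nat.mod_lt t S.hn))

lemma Xbound (S : Setup m n p xp) (x : Fin m → ℝ) (t : ℕ) (j : Fin m) :
    |Orb m n p x t j| ≤ (1 + Dst m n p xp x 0) + Zb m n p xp := by
  have h1 := abs_le_one_add_sq (coord_bound (m:=m) (n:=n) (p:=p) (xp:=xp) x t j)
      (Dst_nonneg (m:=m) (n:=n) (p:=p) (xp:=xp) x 0)
  have h2 := Zb_bound S t j
  calc |Orb m n p x t j|
      ≤ |Orb m n p x t j - Orb m n p xp t j| + |Orb m n p xp t j| := by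
        have := abs_add_le (Orb m n p x t j - Orb m n p xp t j) (Orb m n p xp t j)
        simpa using this
    _ ≤ (1 + Dst m n p xp x 0) + Zb m n p xp := by linarith

lemma FloorM_bound (hm : 0 < m) {v : Fin m → ℝ} {C : ℝ} (h : ∀ j, |v j| ≤ C)
    (j k : Fin m) : FloorM m v j k ∈ Finset.Icc (-(⌈2*C⌉+1)) (⌈2*C⌉+1) := by
  have hm' : (0:ℝ) < m := by exact_mod_cast hm
  have hm1 : (1:ℝ) ≤ m := by exact_mod_cast hm
  set d := v j - v k with hd
  have hdabs : |d| ≤ 2*C := by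
    calc |d| ≤ |v j| + |v k| := abs_sub _ _
      _ ≤ 2*C := by linarith [h j, h k]
  have hC : 0 ≤ C := le_trans (abs_nonneg (v j)) (h j)
  have hup : (FloorM m v j k : ℝ) ≤ 2*C := by
    calc (FloorM m v j k : ℝ) ≤ d / m := Int.floor_le _
      _ ≤ |d| / m := by
          exact (div_le_div_iff_of_pos_right hm').2 (le_abs_self d)
      _ ≤ |d| := div_le_self (abs_nonneg d) hm1
      _ ≤ 2*C := hdabs
  have hlow : -(2*C) - 1 < (FloorM m v j k : ℝ) := by
    have h1 : d / m - 1 < (FloorM m v j k : ℝ) := Int.sub_one_lt_floor _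
    have h2 : -|d| / m ≤ d / m := by
      exact (div_le_div_iff_of_pos_right hm').2 (neg_abs_le d)
    have h3 : -|d| ≤ -|d| / m := by
      rw [neg_div]
      have : |d| / m ≤ |d| := div_le_self (abs_nonneg d) hm1
      linarith
    linarith
  rw [Finset.mem_Icc]
  constructor
  · have : ((-(⌈2*C⌉+1) : ℤ) : ℝ) < (FloorM m v j k : ℝ) := by
      push_cast
      have := Int.le_ceil (2*C)
      linarith
    exact_mod_cast this.le
  · have : (FloorM m v j k : ℝ) ≤ ((⌈2*C⌉+1 : ℤ) : ℝ) := by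
      push_cast
      have := Int.le_ceil (2*C)
      linarith
    exact_mod_cast this

lemma exists_rep (S : Setup m n p xp) (x : Fin m → ℝ) :
    ∃ a b : ℕ, a < b ∧
      FloorM m (Orb m n p x (n*a)) = FloorM m (Orb m n p x (n*b)) := by
  classical
  set C := (1 + Dst m n p xp x 0) + Zb m n p xp with hC
  set N : ℤ := ⌈2*C⌉+1 with hN
  have hmem : ∀ (k : ℕ) (j j' : Fin m),
      FloorM m (Orb m n p x (n*k)) j j' ∈ Finset.Icc (-N) N :=
    fun k j j' => FloorM_bound S.hm (fun j'' => Xbound S x (n*k) j'') j j'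
  set Φ : ℕ → (Fin m → Fin m → {z : ℤ // z ∈ Finset.Icc (-N) N}) :=
    fun k => fun j j' => ⟨FloorM m (Orb m n p x (n*k)) j j', hmem k j j'⟩ with hΦ
  obtain ⟨a, b, hne, heq⟩ := Finite.exists_ne_map_eq_of_infinite Φ
  have hfl : FloorM m (Orb m n p x (n*a)) = FloorM m (Orb m n p x (n*b)) := by
    funext j j'
    have := congrFun (congrFun heq j) j'
    exact congrArg Subtype.val this
  rcases hne.lt_or_gt with h | h
  · exact ⟨a, b, h, hfl⟩
  · exact ⟨b, a, h, hfl.symm⟩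

end
end PF4

namespace PF5
open PF PF2 PF3 PF4 Finset
section
variable {m n : ℕ} {p : ℕ → Fin m} {xp : Fin m → ℝ}

/-- accumulated sorting permutations along the orbit of `x` starting at time `c`. -/
noncomputable def QpA (m n : ℕ) (p : ℕ → Fin m) (x : Fin m → ℝ) (c : ℕ) :
    ℕ → Equiv.Perm (Fin m)
  | 0 => 1
  | t+1 => (sg m n p x (c + t)).trans (QpA m n p x c t)

lemma QpA_succ (x : Fin m → ℝ) (c t : ℕ) (j : Fin m) :
    QpA m n p x c (t+1) j = QpA m n p x c t (sg m n p x (c + t) j) := rfl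

lemma Orb_succ' (x : Fin m → ℝ) (a t : ℕ) :
    Orb m n p x (n*a + (t+1)) = letterV m (p (t % n)) (Orb m n p x (n*a + t)) := by
  have h : n*a + (t+1) = (n*a + t) + 1 := by ring
  rw [h, Orb_succ, Nat.mul_add_mod]

lemma sg_letter (x : Fin m → ℝ) (a t : ℕ) :
    sg m n p x (n*a + t) = Tuple.sort (shiftVec m (p (t % n)) (Orb m n p x (n*a + t))) := by
  unfold sg
  rw [Nat.mul_add_mod]

lemma Orb_add (x : Fin m → ℝ) (c t : ℕ) (hc : n ∣ c) :
    Orb m n p x (c + t) = Orb m n p (Orb m n p x c) t := by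
  obtain ⟨d, rfl⟩ := hc
  show stepsV m (fun i => p (i % n)) x (n*d + t) = _
  rw [stepsV_add]
  have hw : (fun i => p ((n*d + i) % n)) = (fun i => p (i % n)) := by
    funext i
    rw [Nat.mul_add_mod]
  exact congrFun (congrFun (congrArg _ hw) _) t

lemma tail_floor (S : Setup m n p xp) (x : Fin m → ℝ) (a b : ℕ)
    (hfl : FloorM m (Orb m n p x (n*a)) = FloorM m (Orb m n p x (n*b))) : ∀ t,
    FloorM m (Orb m n p x (n*a + t)) = FloorM m (Orb m n p x (n*b + t)) := by
  intro t
  induction t with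
  | zero => simpa using hfl
  | succ t ih =>
      rw [Orb_succ' x a t, Orb_succ' x b t]
      exact floor_letter_eq S.hm ih _

lemma tail_diff (S : Setup m n p xp) (x : Fin m → ℝ) (a b : ℕ)
    (hfl : FloorM m (Orb m n p x (n*a)) = FloorM m (Orb m n p x (n*b))) : ∀ t j,
    Orb m n p x (n*b + t) j - Orb m n p x (n*a + t) j
      = Orb m n p x (n*b) (QpA m n p x (n*a) t j)
        - Orb m n p x (n*a) (QpA m n p x (n*a) t j) := by
  intro t
  induction t with
  | zero => intro j; simp [QpA]
  | succ t ih =>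
      intro j
      have hA : Orb m n p x (n*a + (t+1)) j
          = shiftVec m (p (t % n)) (Orb m n p x (n*a + t)) (sg m n p x (n*a + t) j) := by
        rw [Orb_succ' x a t, letterV_eq_comp, ← sg_letter]
        rfl
      have hB : Orb m n p x (n*b + (t+1)) j
          = shiftVec m (p (t % n)) (Orb m n p x (n*b + t)) (sg m n p x (n*a + t) j) := by
        rw [Orb_succ' x b t, letterV_eq_comp' S.hm (tail_floor S x a b hfl t) (p (t % n)),
          ← sg_letter]
        rfl
      rw [hA, hB, shift_cancel, ih (sg m n p x (n*a + t) j), QpA_succ]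

lemma tail_sg_per (S : Setup m n p xp) (x : Fin m → ℝ) (a b : ℕ) (hab : a < b)
    (hfl : FloorM m (Orb m n p x (n*a)) = FloorM m (Orb m n p x (n*b))) : ∀ t,
    sg m n p x (n*a + t + n*(b-a)) = sg m n p x (n*a + t) := by
  intro t
  have hP : n*(b-a) + n*a = n*b := by
    rw [← Nat.left_distrib]
    congr 1
    omega
  have hidx : n*a + t + n*(b-a) = n*b + t := by omega
  rw [hidx, sg_letter x b t, sg_letter x a t]
  exact sort_perm_eq_of_floor_eq S.hm (tail_floor S x a b hfl t) (p (t % n))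

lemma QpA_addS (S : Setup m n p xp) (x : Fin m → ℝ) (a b : ℕ) (hab : a < b)
    (hfl : FloorM m (Orb m n p x (n*a)) = FloorM m (Orb m n p x (n*b))) :
    ∀ u, QpA m n p x (n*a) (n*(b-a) + u)
      = (QpA m n p x (n*a) u).trans (QpA m n p x (n*a) (n*(b-a))) := by
  intro u
  induction u with
  | zero => ext j; simp [QpA]
  | succ u ih =>
      have h : n*(b-a) + (u+1) = (n*(b-a) + u) + 1 := by ring
      rw [h]
      show (sg m n p x (n*a + (n*(b-a) + u))).trans (QpA m n p x (n*a) (n*(b-a) + u)) = _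
      have hidx : n*a + (n*(b-a) + u) = n*a + u + n*(b-a) := by ring
      rw [hidx, tail_sg_per S x a b hab hfl u, ih]
      show (sg m n p x (n*a + u)).trans
          ((QpA m n p x (n*a) u).trans (QpA m n p x (n*a) (n*(b-a)))) = _
      rw [← Equiv.trans_assoc]
      rfl

lemma QpA_mulS (S : Setup m n p xp) (x : Fin m → ℝ) (a b : ℕ) (hab : a < b)
    (hfl : FloorM m (Orb m n p x (n*a)) = FloorM m (Orb m n p x (n*b))) :
    ∀ k, QpA m n p x (n*a) (k*(n*(b-a)))
      = (QpA m n p x (n*a) (n*(b-a)))^k := by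
  intro k
  induction k with
  | zero => rw [Nat.zero_mul, pow_zero]; rfl
  | succ k ih =>
      have h : (k+1)*(n*(b-a)) = n*(b-a) + k*(n*(b-a)) := by ring
      rw [h, QpA_addS S x a b hab hfl, ih, ← Equiv.Perm.mul_def, ← pow_succ']

lemma tail_accum (S : Setup m n p xp) (x : Fin m → ℝ) (a b : ℕ) (hab : a < b)
    (hfl : FloorM m (Orb m n p x (n*a)) = FloorM m (Orb m n p x (n*b))) :
    ∀ u j, Orb m n p x (n*a + u*(n*(b-a))) j
      = Orb m n p x (n*a) j + ∑ i ∈ Finset.range u,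
          (Orb m n p x (n*b) (((QpA m n p x (n*a) (n*(b-a)))^i) j)
            - Orb m n p x (n*a) (((QpA m n p x (n*a) (n*(b-a)))^i) j)) := by
  intro u
  induction u with
  | zero => intro j; simp
  | succ u ih =>
      intro j
      have hP : n*(b-a) + n*a = n*b := by
        rw [← Nat.left_distrib]
        congr 1
        omega
      have h1 : (u+1)*(n*(b-a)) = u*(n*(b-a)) + n*(b-a) := by ring
      have h : n*a + (u+1)*(n*(b-a)) = n*b + u*(n*(b-a)) := by omega
      have hd := tail_diff S x a b hfl (u*(n*(b-a))) j
      rw [QpA_mulS S x a b hab hfl] at hd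
      rw [h, Finset.sum_range_succ]
      linarith [hd, ih j]

end
end PF5

namespace PF6
open PF PF2 PF3 PF4 PF5 Finset
section
variable {m n : ℕ} {p : ℕ → Fin m} {xp : Fin m → ℝ}

lemma periodic_block_sum (g : ℕ → ℝ) (r : ℕ) (hper : ∀ q i, g (q*r + i) = g i) :
    ∀ q, ∑ i ∈ Finset.range (q*r), g i = (q:ℝ) * ∑ i ∈ Finset.range r, g i := by
  intro q
  induction q with
  | zero => simp
  | succ q ih =>
      have h1 : (q+1)*r = q*r + r := by ring
      rw [h1, Finset.sum_range_add, ih]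
      have h3 : ∑ i ∈ Finset.range r, g (q*r + i) = ∑ i ∈ Finset.range r, g i :=
        Finset.sum_congr rfl (fun i _ => hper q i)
      rw [h3]
      push_cast
      ring

lemma tail_ret (S : Setup m n p xp) (x : Fin m → ℝ) (a b : ℕ) (hab : a < b)
    (hfl : FloorM m (Orb m n p x (n*a)) = FloorM m (Orb m n p x (n*b))) :
    Orb m n p x (n*a + (orderOf (QpA m n p x (n*a) (n*(b-a))))*(n*(b-a)))
      = Orb m n p x (n*a) := by
  classical
  set κ := QpA m n p x (n*a) (n*(b-a)) with hκ
  set r := orderOf κ with hrdef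
  have hκr : κ ^ r = 1 := pow_orderOf_eq_one κ
  have haccum := tail_accum S x a b hab hfl
  have hpow : ∀ q i, κ^(q*r + i) = κ^i := by
    intro q i
    rw [pow_add, show κ^(q*r) = 1 by rw [mul_comm, pow_mul, hκr, one_pow], one_mul]
  have key : ∀ (q : ℕ) (j : Fin m), Orb m n p x (n*a + (q*r)*(n*(b-a))) j
      = Orb m n p x (n*a) j + (q:ℝ) * (∑ i ∈ Finset.range r,
          (Orb m n p x (n*b) ((κ^i) j) - Orb m n p x (n*a) ((κ^i) j))) := by
    intro q j
    rw [haccum (q*r) j]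
    congr 1
    exact periodic_block_sum (fun i => Orb m n p x (n*b) ((κ^i) j)
      - Orb m n p x (n*a) ((κ^i) j)) r (fun q' i => by simp only [hpow]) q
  have hS : ∀ j, ∑ i ∈ Finset.range r,
      (Orb m n p x (n*b) ((κ^i) j) - Orb m n p x (n*a) ((κ^i) j)) = 0 := by
    intro j
    by_contra hne
    set Ssum := ∑ i ∈ Finset.range r,
      (Orb m n p x (n*b) ((κ^i) j) - Orb m n p x (n*a) ((κ^i) j)) with hSs
    have habs : 0 < |Ssum| := abs_pos.2 hne
    set C := (1 + Dst m n p xp x 0) + Zb m n p xp with hCdef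
    obtain ⟨q, hq⟩ := exists_nat_gt ((2*C) / |Ssum|)
    have hacc := key q j
    have hb1 := Xbound S x (n*a + (q*r)*(n*(b-a))) j
    have hb2 := Xbound S x (n*a) j
    rw [← hCdef] at hb1 hb2
    have h4 : |(q:ℝ) * Ssum| ≤ 2*C := by
      have : (q:ℝ) * Ssum = Orb m n p x (n*a + (q*r)*(n*(b-a))) j
          - Orb m n p x (n*a) j := by rw [hacc]; ring
      rw [this]
      calc |Orb m n p x (n*a + (q*r)*(n*(b-a))) j - Orb m n p x (n*a) j|
          ≤ |Orb m n p x (n*a + (q*r)*(n*(b-a))) j| + |Orb m n p x (n*a) j| := abs_sub _ _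
        _ ≤ 2*C := by linarith
    have h5 : (2*C) < (q:ℝ) * |Ssum| := (div_lt_iff₀ habs).1 hq
    rw [abs_mul, abs_of_nonneg (Nat.cast_nonneg q)] at h4
    linarith
  funext j
  have h6 := key 1 j
  rw [hS j] at h6
  rw [show (1:ℕ)*r = r from Nat.one_mul r] at h6
  rw [h6]
  ring

lemma part2 (S : Setup m n p xp) (x : Fin m → ℝ) :
    ∃ k, SameClosedAlcove m xp (Orb m n p x (n*k)) := by
  classical
  obtain ⟨a, b, hab, hfl⟩ := exists_rep S x
  set κ := QpA m n p x (n*a) (n*(b-a)) with hκ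
  set r := orderOf κ with hrdef
  have hret := tail_ret S x a b hab hfl
  rw [← hκ, ← hrdef] at hret
  set P := r*(n*(b-a)) with hPdef
  have hrpos : 0 < r := orderOf_pos κ
  have hPpos : 0 < P := Nat.mul_pos hrpos (Nat.mul_pos S.hn (by omega))
  have hPdvd : n ∣ P := ⟨r*(b-a), by rw [hPdef]; ring⟩
  have hnadvd : n ∣ n*a := ⟨a, rfl⟩
  have hper1 : ∀ t, Orb m n p x (n*a + P + t) = Orb m n p x (n*a + t) := by
    intro t
    rw [Orb_add x (n*a + P) t (Dvd.dvd.add hnadvd hPdvd), Orb_add x (n*a) t hnadvd, hret]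
  have hperq : ∀ q t, Orb m n p x (n*a + q*P + t) = Orb m n p x (n*a + t) := by
    intro q
    induction q with
    | zero => intro t; simp
    | succ q ih =>
        intro t
        have hidx : n*a + (q+1)*P + t = n*a + P + (q*P + t) := by ring
        rw [hidx, hper1 (q*P + t)]
        have hidx2 : n*a + (q*P + t) = n*a + q*P + t := by ring
        rw [hidx2, ih t]
  have hzper : ∀ q : ℕ, Orb m n p xp (n*a + q*P) = Orb m n p xp (n*a) := by
    intro q
    obtain ⟨d, hd⟩ := hPdvd
    have hidx : n*a + q*P = n*a + n*(q*d) := by rw [hd]; ring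
    rw [hidx]
    exact Orb_per' S (q*d) (n*a)
  have hDconst : ∀ t, Dst m n p xp x (n*a + t) = Dst m n p xp x (n*a) := by
    intro t
    have hle : Dst m n p xp x (n*a + t) ≤ Dst m n p xp x (n*a) :=
      Dst_mono_le x (Nat.le_add_right _ _)
    have h2 : Dst m n p xp x (n*a + t*P) = Dst m n p xp x (n*a) := by
      unfold Dst
      have h3 := hperq t 0
      simp only [Nat.add_zero] at h3
      rw [h3, hzper t]
    have htP : t ≤ t*P := Nat.le_mul_of_pos_right t hPpos
    have hge : Dst m n p xp x (n*a + t*P) ≤ Dst m n p xp x (n*a + t) :=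
      Dst_mono_le x (by omega)
    linarith
  set u := Orb m n p x (n*a) with hu
  have hAL : ∀ t, AlignedAt m n p xp u t := by
    intro t
    have hDc : Dst m n p xp x ((n*a + t) + 1) = Dst m n p xp x (n*a + t) := by
      have e1 := hDconst (t+1)
      have e0 : n*a + (t+1) = (n*a + t) + 1 := by ring
      rw [e0] at e1
      rw [e1, hDconst t]
    have halign := align_of_Dconst x (n*a + t) hDc
    unfold AlignedAt at halign ⊢
    have e1 : p ((n*a + t) % n) = p (t % n) := by rw [Nat.mul_add_mod]
    have e2 : Orb m n p xp (n*a + t) = Orb m n p xp t := by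
      rw [Nat.add_comm]
      exact Orb_per' S a t
    have e3 : Orb m n p x (n*a + t) = Orb m n p u t := by
      rw [hu]
      exact Orb_add x (n*a) t hnadvd
    rw [e1, e2, e3] at halign
    exact halign
  exact ⟨a, lemE S hAL⟩

lemma SCA_propagate (S : Setup m n p xp) (x : Fin m → ℝ) (K : ℕ)
    (h : SameClosedAlcove m xp (Orb m n p x (n*K))) :
    SameClosedAlcove m xp (Orb m n p x (n*(K+1))) := by
  have h2 := SCA_all S h n
  rw [show Orb m n p xp n = xp from S.hfixW] at h2
  have e : Orb m n p (Orb m n p x (n*K)) n = Orb m n p x (n*(K+1)) := by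
    rw [← Orb_add x (n*K) n ⟨K, rfl⟩]
    congr 1
  rw [e] at h2
  exact h2

lemma SCA_ge (S : Setup m n p xp) (x : Fin m → ℝ) (K : ℕ)
    (h : SameClosedAlcove m xp (Orb m n p x (n*K))) :
    ∀ Δ, SameClosedAlcove m xp (Orb m n p x (n*(K+Δ))) := by
  intro Δ
  induction Δ with
  | zero => simpa using h
  | succ Δ ih =>
      have := SCA_propagate S x (K+Δ) ih
      have e : K + (Δ+1) = (K + Δ) + 1 := by ring
      rw [e]
      exact this

lemma periodic_iter (x : Fin m → ℝ) (k : ℕ) (h : Orb m n p x (n*k) = x) :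
    ∀ j, Orb m n p x (n*(k*j)) = x := by
  intro j
  induction j with
  | zero => simp [Orb, stepsV]
  | succ j ih =>
      have hidx : n*(k*(j+1)) = n*(k*j) + n*k := by ring
      rw [hidx, Orb_add x (n*(k*j)) (n*k) ⟨k*j, rfl⟩, ih, h]

end
end PF6

/-- Let `gcd(m,n) = 1` and `p` an `(m,n)`-parking function with fixed point `x_p`
in (the interior of) the alcove `A_p`.  Then: every point of the closed alcove
`A_p` is periodic with period dividing `m`; every point of `V^m` is eventually
mapped into `A_p`; and the periodic points of `p` are exactly the points of `A_p`
(so the periodic non-fixed points are exactly `A_p \ {x_p}`). -/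
theorem periodic_points_are_alcove (m n : ℕ) (hm : 0 < m) (hn : 0 < n)
    (hcop : Nat.gcd m n = 1) (p : ℕ → Fin m) (hpark : IsParking m n p)
    (xp : Fin m → ℝ) (hxp : InV m xp) (hfix : stepsV m p xp n = xp)
    (halc : ∀ j k : Fin m, j ≠ k → ∀ t : ℤ, xp j - xp k ≠ (m : ℝ) * t) :
    (∀ y : Fin m → ℝ, InV m y → SameClosedAlcove m xp y →
      stepsV m (fun i => p (i % n)) y (n * m) = y) ∧
    (∀ x : Fin m → ℝ, InV m x →
      ∃ k : ℕ, SameClosedAlcove m xp (stepsV m (fun i => p (i % n)) x (n * k))) ∧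
    (∀ x : Fin m → ℝ, InV m x →
      ((∃ k : ℕ, 1 ≤ k ∧ stepsV m (fun i => p (i % n)) x (n * k) = x) ↔
        SameClosedAlcove m xp x)) := by
  have hfixW : stepsV m (fun i => p (i % n)) xp n = xp := by
    rw [PF.stepsV_congr xp n (fun i hi => congrArg p (Nat.mod_eq_of_lt hi))]
    exact hfix
  have S : PF.Setup m n p xp := ⟨hm, hn, hcop, hxp, hfixW, halc⟩
  refine ⟨?_, ?_, ?_⟩
  · intro y _ hSCA
    exact PF2.part1 S hSCA
  · intro x _
    obtain ⟨k, hk⟩ := PF6.part2 S x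
    exact ⟨k, hk⟩
  · intro x _
    constructor
    · rintro ⟨k, hk1, hk2⟩
      obtain ⟨K, hK⟩ := PF6.part2 S x
      have h2 := PF6.SCA_ge S x K hK (k*K - K)
      have hKk : K + (k*K - K) = k*K := by
        have : K ≤ k*K := Nat.le_mul_of_pos_left K (by omega)
        omega
      rw [hKk] at h2
      rwa [PF6.periodic_iter x k hk2 K] at h2
    · intro hSCA
      exact ⟨m, hm, PF2.part1 S hSCA⟩
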